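/- Define Γ on binary words by Γ(1^{m_0} 2^{n_0} 1^{m_1} 2^{n_1} ⋯ 1^{m_d} 2^{n_d}) = 1^{m_0} 2 1^{m_1−1} ⋯ 2 1^{m_{d−1}−1} 2 1^{m_d} 2^{n_0−1} 1 2^{n_1−1} ⋯ 2^{n_{d−2}−1} 1 2^{n_{d−1}−1+n_d}. Then for every binary word ω, des(ω) = exc(Γ(ω)). -/

import Mathlib

/-- Count the leading letters of a list equal to `a`; return the count and the rest. -/
def leadCount (a : ℕ) : List ℕ → ℕ × List ℕ
  | [] => (0, [])
  | b :: rest =>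
    if b = a then
      let p := leadCount a rest
      (p.1 + 1, p.2)
    else (0, b :: rest)

def blocksAux : ℕ → List ℕ → List (ℕ × ℕ)
  | 0, _ => []
  | _, [] => []
  | fuel + 1, w =>
    let p := leadCount 1 w
    let q := leadCount 2 p.2
    (p.1, q.1) :: blocksAux fuel q.2

/-- The descent-block decomposition `[(m₀,n₀),…,(m_d,n_d)]` of a binary word
`1^{m₀} 2^{n₀} ⋯ 1^{m_d} 2^{n_d}`. -/
def blocks (w : List ℕ) : List (ℕ × ℕ) := blocksAux w.length w

/-- The word `1^{m₀} 2^{n₀} ⋯ 1^{m_d} 2^{n_d}` determined by blocks. -/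
def blockWord (bs : List (ℕ × ℕ)) : List ℕ :=
  bs.flatMap fun p => List.replicate p.1 1 ++ List.replicate p.2 2

/-- `[(m₀,n₀),…,(m_d,n_d)]` is a valid descent-block decomposition:
`m_i > 0` for `1 ≤ i ≤ d` and `n_j > 0` for `0 ≤ j ≤ d-1`. -/
def ValidBlocks (bs : List (ℕ × ℕ)) : Prop :=
  bs ≠ [] ∧ (∀ p ∈ bs.tail, 0 < p.1) ∧ (∀ p ∈ bs.dropLast, 0 < p.2)

/-- A word on the alphabet {1,2}. -/
def IsBinary (w : List ℕ) : Prop := ∀ a ∈ w, a = 1 ∨ a = 2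

/-- The descent number of a word. -/
def des (w : List ℕ) : ℕ := (w.zip w.tail).countP fun p => decide (p.2 < p.1)

/-- The excedance number of a binary word with `k` ones: the number of
positions `i ≤ k` carrying the letter 2. -/
def exc (w : List ℕ) : ℕ := (w.take (w.count 1)).count 2

/-- `Ψ = Φ₁⁻¹` on binary words, via the descent-block decomposition. -/
def psiBlocks (bs : List (ℕ × ℕ)) : List ℕ :=
  List.replicate (bs.headD (0,0)).1 1
    ++ bs.tail.flatMap (fun p => 2 :: List.replicate (p.1 - 1) 1)
    ++ bs.dropLast.flatMap (fun p => List.replicate (p.2 - 1) 2 ++ [1])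
    ++ List.replicate (bs.getLastD (0,0)).2 2

def Psi (w : List ℕ) : List ℕ := psiBlocks (blocks w)

/-- Foata's second fundamental transformation on binary words. -/
def phi2Blocks (bs : List (ℕ × ℕ)) : List ℕ :=
  bs.tail.reverse.flatMap (fun p => List.replicate (p.1 - 1) 1 ++ [2])
    ++ List.replicate (bs.headD (0,0)).1 1
    ++ bs.dropLast.flatMap (fun p => List.replicate (p.2 - 1) 2 ++ [1])
    ++ List.replicate (bs.getLastD (0,0)).2 2

def Phi2 (w : List ℕ) : List ℕ := phi2Blocks (blocks w)

/-- The extended Steingrímsson map `Γ` on binary words. -/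
def gammaBlocks (bs : List (ℕ × ℕ)) : List ℕ :=
  match bs with
  | [] => []
  | [(m0, n0)] => List.replicate m0 1 ++ List.replicate n0 2
  | (m0, n0) :: rest =>
      List.replicate m0 1
        ++ rest.dropLast.flatMap (fun p => 2 :: List.replicate (p.1 - 1) 1)
        ++ (2 :: List.replicate (rest.getLastD (0,0)).1 1)
        ++ (let ns := n0 :: rest.map Prod.snd
            ns.dropLast.dropLast.flatMap (fun nj => List.replicate (nj - 1) 2 ++ [1])
              ++ List.replicate (ns.dropLast.getLastD 0 - 1 + ns.getLastD 0) 2)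

def Gamma (w : List ℕ) : List ℕ := gammaBlocks (blocks w)

/-- The involution `φ` on binary words. -/
def phi (w : List ℕ) : List ℕ :=
  let bs := blocks w
  let ns := bs.map Prod.snd
  let newms : List ℕ :=
    match (bs.map Prod.fst).reverse with
    | [] => []
    | [a] => [a]
    | a :: rest => (a - 1) :: (rest.dropLast ++ [rest.getLastD 0 + 1])
  blockWord (newms.zip ns)

/-- Fibonacci words: binary words with no two consecutive ones. -/
def IsFib (w : List ℕ) : Prop :=
  IsBinary w ∧ w.Chain' fun a b => ¬(a = 1 ∧ b = 1)

def FibSet (n : ℕ) : Set (List ℕ) := {w | IsFib w ∧ w.length = n}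

/-- Fibonacci words of length `n` ending with the letter 1. -/
def FibSet' (n : ℕ) : Set (List ℕ) :=
  {w | IsFib w ∧ w.length = n ∧ w.getLast? = some 1}

/-- Binary words of length `n` with no two consecutive twos. -/
def GSet (n : ℕ) : Set (List ℕ) :=
  {w | IsBinary w ∧ w.length = n ∧ w.Chain' fun a b => ¬(a = 2 ∧ b = 2)}

/-- The word `1^{m₀} 2^{d+n₀-1} 1 2^{n₁-1} ⋯ 1 2^{n_{d-1}-1} 1 2^{n_d}`. -/
def Rword (m0 : ℕ) (ns : List ℕ) : List ℕ :=
  match ns with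
  | [] => List.replicate m0 1
  | [n0] => List.replicate m0 1 ++ List.replicate n0 2
  | n0 :: rest =>
      List.replicate m0 1 ++ List.replicate (rest.length + n0 - 1) 2
        ++ rest.dropLast.flatMap (fun nj => 1 :: List.replicate (nj - 1) 2)
        ++ (1 :: List.replicate (rest.getLastD 0) 2)

def RSet (n : ℕ) : Set (List ℕ) :=
  {w | ∃ m0 ns, m0 ≤ 1 ∧ ns ≠ [] ∧ (∀ j ∈ List.dropLast ns, 1 ≤ j) ∧
        w = Rword m0 ns ∧ w.length = n}

/-- The Fibonacci word `1^{m₀} 2^{n₀} 1 2^{n₁} ⋯ 1 2^{n_d}`. -/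
def Fword (m0 : ℕ) (ns : List ℕ) : List ℕ :=
  List.replicate m0 1 ++ List.replicate (ns.headD 0) 2
    ++ ns.tail.flatMap fun nj => 1 :: List.replicate nj 2

lemma leadCount_eq (a : ℕ) (w : List ℕ) :
    w = List.replicate (leadCount a w).1 a ++ (leadCount a w).2 := by
  induction w with
  | nil => simp [leadCount]
  | cons b rest ih =>
    by_cases h : b = a
    · simp [leadCount, h, List.replicate_succ]
      exact ih
    · simp [leadCount, h]

lemma leadCount_head (a : ℕ) (w : List ℕ) (b : ℕ)
    (hb : (leadCount a w).2.head? = some b) : b ≠ a := by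
  induction w with
  | nil => simp [leadCount] at hb
  | cons c rest ih =>
    by_cases h : c = a
    · simp [leadCount, h] at hb; exact ih hb
    · simp [leadCount, h] at hb; omega

lemma leadCount_pos (a : ℕ) (w : List ℕ) (hw : w.head? = some a) :
    0 < (leadCount a w).1 := by
  cases w with
  | nil => simp at hw
  | cons b rest => simp at hw; simp [leadCount, hw]

lemma IsBinary.suffix {x w : List ℕ} (hw : IsBinary w) (h : x <:+ w) : IsBinary x :=
  fun a ha => hw a (h.subset ha)

lemma length_leadCount2 (w : List ℕ) (hw : IsBinary w) (hne : w ≠ []) :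
    (leadCount 2 (leadCount 1 w).2).2.length < w.length := by
  have h1 := leadCount_eq 1 w
  have h2 := leadCount_eq 2 (leadCount 1 w).2
  have hl1 : w.length = (leadCount 1 w).1 + (leadCount 1 w).2.length := by
    conv_lhs => rw [h1]; simp
  have hl2 : (leadCount 1 w).2.length
      = (leadCount 2 (leadCount 1 w).2).1 + (leadCount 2 (leadCount 1 w).2).2.length := by
    conv_lhs => rw [h2]; simp
  rcases Nat.eq_zero_or_pos (leadCount 1 w).1 with h | h
  · -- then w = (leadCount 1 w).2, its head is 2
    have hw2 : (leadCount 1 w).2 = w := by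
      symm; conv_lhs => rw [h1, h]
      simp
    have hne2 : (leadCount 1 w).2 ≠ [] := by rw [hw2]; exact hne
    obtain ⟨b, t, hbt⟩ := List.exists_cons_of_ne_nil hne2
    have hb2 : b = 2 := by
      have hb : b = 1 ∨ b = 2 := by
        apply hw; rw [← hw2, hbt]; simp
      have := leadCount_head 1 w b (by rw [hbt]; rfl)
      omega
    have := leadCount_pos 2 (leadCount 1 w).2 (by rw [hbt, hb2]; rfl)
    omega
  · omega

lemma blocksAux_fuel (f1 : ℕ) : ∀ (f2 : ℕ) (w : List ℕ), IsBinary w →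
    w.length ≤ f1 → w.length ≤ f2 → blocksAux f1 w = blocksAux f2 w := by
  induction f1 with
  | zero => intro f2 w _ h1 _;
            have : w = [] := List.eq_nil_of_length_eq_zero (by omega)
            subst this; cases f2 <;> rfl
  | succ f1 ih =>
    intro f2 w hw h1 h2
    rcases eq_or_ne w [] with rfl | hne
    · cases f2 <;> rfl
    · have hlen := length_leadCount2 w hw hne
      have hwpos : 0 < w.length := List.length_pos_iff.mpr hne
      obtain ⟨f2', rfl⟩ : ∃ f2', f2 = f2' + 1 := ⟨f2 - 1, by omega⟩
      obtain ⟨b, t, rfl⟩ := List.exists_cons_of_ne_nil hne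
      show _ :: blocksAux f1 _ = _ :: blocksAux f2' _
      have hbin2 : IsBinary (leadCount 2 (leadCount 1 (b :: t)).2).2 := by
        apply hw.suffix
        refine List.IsSuffix.trans ⟨_, (leadCount_eq 2 (leadCount 1 (b :: t)).2).symm⟩
          ⟨_, (leadCount_eq 1 (b :: t)).symm⟩
      rw [ih f2' _ hbin2 (by simp at hlen h1 ⊢; omega) (by simp at hlen h2 ⊢; omega)]

lemma blocks_cons (w : List ℕ) (hw : IsBinary w) (hne : w ≠ []) :
    ∃ m0 n0 w2, w = List.replicate m0 1 ++ List.replicate n0 2 ++ w2 ∧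
      blocks w = (m0, n0) :: blocks w2 ∧ w2.length < w.length ∧ IsBinary w2 ∧
      (w2 ≠ [] → w2.head? = some 1 ∧ 0 < n0) := by
  refine ⟨(leadCount 1 w).1, (leadCount 2 (leadCount 1 w).2).1,
    (leadCount 2 (leadCount 1 w).2).2, ?_, ?_, ?_, ?_, ?_⟩
  · conv_lhs => rw [leadCount_eq 1 w]
    rw [List.append_assoc]
    congr 1
    exact leadCount_eq 2 (leadCount 1 w).2
  · have hlen := length_leadCount2 w hw hne
    have hwpos : 0 < w.length := List.length_pos_iff.mpr hne
    obtain ⟨b, t, rfl⟩ := List.exists_cons_of_ne_nil hne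
    show blocksAux (t.length + 1) (b :: t) = _
    show _ :: blocksAux t.length _ = _
    simp only [List.length_cons] at hlen
    congr 1
    apply blocksAux_fuel
    · apply hw.suffix
      refine List.IsSuffix.trans ⟨_, (leadCount_eq 2 (leadCount 1 (b :: t)).2).symm⟩
        ⟨_, (leadCount_eq 1 (b :: t)).symm⟩
    · omega
    · omega
  · exact length_leadCount2 w hw hne
  · apply hw.suffix
    refine List.IsSuffix.trans ⟨_, (leadCount_eq 2 (leadCount 1 w).2).symm⟩
      ⟨_, (leadCount_eq 1 w).symm⟩
  · intro hne2
    obtain ⟨b, t, hbt⟩ := List.exists_cons_of_ne_nil hne2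
    constructor
    · have hb : b = 1 ∨ b = 2 := by
        apply hw
        have : (leadCount 2 (leadCount 1 w).2).2 <:+ w :=
          List.IsSuffix.trans ⟨_, (leadCount_eq 2 (leadCount 1 w).2).symm⟩
            ⟨_, (leadCount_eq 1 w).symm⟩
        exact this.subset (by rw [hbt]; simp)
      have := leadCount_head 2 (leadCount 1 w).2 b (by rw [hbt]; rfl)
      have hb1 : b = 1 := by omega
      rw [hbt, hb1]
      rfl
    · -- (leadCount 1 w).2 nonempty and head = 2
      have hp2ne : (leadCount 1 w).2 ≠ [] := by
        intro h
        rw [h] at hbt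
        simp [leadCount] at hbt
      obtain ⟨c, s, hcs⟩ := List.exists_cons_of_ne_nil hp2ne
      have hc : c = 1 ∨ c = 2 := by
        apply hw
        have : (leadCount 1 w).2 <:+ w := ⟨_, (leadCount_eq 1 w).symm⟩
        exact this.subset (by rw [hcs]; simp)
      have := leadCount_head 1 w c (by rw [hcs]; rfl)
      have hc2 : c = 2 := by omega
      exact leadCount_pos 2 _ (by rw [hcs, hc2]; rfl)

lemma des_cons_cons (a b : ℕ) (t : List ℕ) :
    des (a :: b :: t) = (if b < a then 1 else 0) + des (b :: t) := by
  simp only [des, List.tail_cons, List.zip_cons_cons, List.countP_cons]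
  by_cases h : b < a <;> simp [h] <;> omega

lemma des_cons_not_lt (a : ℕ) (w : List ℕ) (h : ∀ b, w.head? = some b → ¬ b < a) :
    des (a :: w) = des w := by
  cases w with
  | nil => rfl
  | cons c t =>
    rw [des_cons_cons]
    have := h c rfl
    simp [this]

lemma des_cons_lt (a b : ℕ) (w : List ℕ) (h : w.head? = some b) (hlt : b < a) :
    des (a :: w) = des w + 1 := by
  cases w with
  | nil => simp at h
  | cons c t =>
    simp at h; subst h
    rw [des_cons_cons]
    simp [hlt]; omega

lemma des_replicate_one (m : ℕ) (w : List ℕ) (hw : w.head? ≠ some 0) :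
    des (List.replicate m 1 ++ w) = des w := by
  induction m with
  | zero => simp
  | succ m ih =>
    rw [List.replicate_succ, List.cons_append, des_cons_not_lt, ih]
    intro b hb
    cases m with
    | zero =>
      simp at hb
      intro hlt
      have hb0 : b = 0 := by omega
      subst hb0
      exact hw hb
    | succ k => simp [List.replicate_succ] at hb; omega

lemma des_replicate_two (n : ℕ) (w : List ℕ) (hw : w.head? = some 1) :
    des (List.replicate n 2 ++ w) = (if n = 0 then 0 else 1) + des w := by
  induction n with
  | zero => simp
  | succ n ih =>
    rw [List.replicate_succ, List.cons_append]
    cases n with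
    | zero =>
      simp
      rw [des_cons_lt 2 1 _ (by simpa using hw) (by omega)]
      omega
    | succ k =>
      rw [des_cons_not_lt, ih]
      · simp
      · intro b hb
        simp [List.replicate_succ] at hb
        omega

lemma des_replicate_self (n a : ℕ) : des (List.replicate n a) = 0 := by
  induction n with
  | zero => rfl
  | succ n ih =>
    rw [List.replicate_succ]
    cases n with
    | zero => rfl
    | succ k =>
      rw [des_cons_not_lt]
      · simpa [List.replicate_succ] using ih
      · intro b hb
        simp [List.replicate_succ] at hb
        omega

lemma blocks_nil : blocks [] = [] := rfl

lemma des_blocks_aux : ∀ (n : ℕ) (w : List ℕ), w.length ≤ n → IsBinary w → w ≠ [] →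
    des w = (blocks w).length - 1 := by
  intro n
  induction n with
  | zero =>
    intro w h _ hne
    exact absurd (List.eq_nil_of_length_eq_zero (Nat.le_zero.mp h)) hne
  | succ n ih =>
    intro w hlen hw hne
    obtain ⟨m0, n0, w2, hdec, hblocks, hlt, hbin2, hhead⟩ := blocks_cons w hw hne
    rcases eq_or_ne w2 [] with rfl | hne2
    · rw [hblocks]
      conv_lhs => rw [hdec]
      simp only [List.append_nil]
      rw [blocks_nil]
      rw [des_replicate_one]
      · rw [des_replicate_self]; simp
      · cases n0 with
        | zero => simp
        | succ k => simp [List.replicate_succ]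
    · obtain ⟨hh2, hn0⟩ := hhead hne2
      have hblk2 := blocks_cons w2 hbin2 hne2
      obtain ⟨a, b, c, _, hb2, _, _, _⟩ := hblk2
      rw [hblocks]
      conv_lhs => rw [hdec, List.append_assoc]
      rw [des_replicate_one, des_replicate_two n0 w2 hh2]
      · have hd2 : des w2 = (blocks w2).length - 1 := ih w2 (by omega) hbin2 hne2
        simp only [List.length_cons]
        rw [hd2, hb2]
        simp only [List.length_cons]
        have : n0 ≠ 0 := by omega
        simp [this]
        omega
      · cases n0 with
        | zero => omega
        | succ k =>
          rw [List.replicate_succ]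
          simp

lemma blocks_fst_pos : ∀ (n : ℕ) (w : List ℕ), w.length ≤ n → IsBinary w →
    w.head? = some 1 → ∀ p ∈ blocks w, 0 < p.1 := by
  intro n
  induction n with
  | zero =>
    intro w h _ hh
    have : w = [] := List.eq_nil_of_length_eq_zero (by omega)
    subst this; simp at hh
  | succ n ih =>
    intro w hlen hw hh p hp
    have hne : w ≠ [] := by intro h; subst h; simp at hh
    obtain ⟨m0, n0, w2, hdec, hblocks, hlt, hbin2, hhead⟩ := blocks_cons w hw hne
    have hm0 : 0 < m0 := by
      by_contra h
      have hm : m0 = 0 := by omega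
      subst hm
      simp at hdec
      cases n0 with
      | zero =>
        simp at hdec
        subst hdec
        omega
      | succ k =>
        rw [hdec, List.replicate_succ] at hh
        simp at hh
    rw [hblocks] at hp
    rcases List.mem_cons.mp hp with rfl | hp2
    · exact hm0
    · rcases eq_or_ne w2 [] with rfl | hne2
      · rw [blocks_nil] at hp2; simp at hp2
      · exact ih w2 (by omega) hbin2 (hhead hne2).1 p hp2

lemma exc_gamma_single (m0 n0 : ℕ) : exc (gammaBlocks [(m0, n0)]) = 0 := by
  show exc (List.replicate m0 1 ++ List.replicate n0 2) = 0
  unfold exc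
  have hc : (List.replicate m0 1 ++ List.replicate n0 2).count 1 = m0 := by
    simp [List.count_replicate]
  rw [hc]
  have h2 := List.take_left (l₁ := List.replicate m0 1) (l₂ := List.replicate n0 2)
  rw [List.length_replicate] at h2
  rw [h2]
  simp [List.count_replicate]

lemma gammaBlocks_cons₂ (m0 n0 : ℕ) (p : ℕ × ℕ) (rest' : List (ℕ × ℕ)) :
    gammaBlocks ((m0, n0) :: p :: rest') =
      List.replicate m0 1
        ++ (p :: rest').dropLast.flatMap (fun q => 2 :: List.replicate (q.1 - 1) 1)
        ++ (2 :: List.replicate ((p :: rest').getLastD (0,0)).1 1)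
        ++ (let ns := n0 :: (p :: rest').map Prod.snd
            ns.dropLast.dropLast.flatMap (fun nj => List.replicate (nj - 1) 2 ++ [1])
              ++ List.replicate (ns.dropLast.getLastD 0 - 1 + ns.getLastD 0) 2) := rfl

lemma sum_len_aux (l : List (ℕ × ℕ)) :
    (List.map (List.length ∘ fun q : ℕ × ℕ => 2 :: List.replicate (q.1 - 1) 1) l).sum
      = (l.map fun q => q.1 - 1).sum + l.length := by
  induction l with
  | nil => simp
  | cons q t iht => simp only [List.map_cons, List.sum_cons, List.length_cons, iht,
      Function.comp_apply, List.length_cons, List.length_replicate]; omega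

lemma sum_len_aux2 (l : List ℕ) :
    (List.map (List.count 1 ∘ fun nj => List.replicate (nj - 1) 2 ++ [1]) l).sum = l.length := by
  induction l with
  | nil => simp
  | cons x t iht => simp only [List.map_cons, List.sum_cons, iht, Function.comp_apply,
      List.count_append, List.count_replicate, List.length_cons]
                    simp
                    omega

lemma exc_gamma_cons (m0 n0 md nd : ℕ) (rs : List (ℕ × ℕ)) (hmd : 0 < md) :
    exc (gammaBlocks ((m0, n0) :: (rs ++ [(md, nd)]))) = rs.length + 1 := by
  obtain ⟨md', rfl⟩ : ∃ md', md = md' + 1 := ⟨md - 1, by omega⟩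
  obtain ⟨p, rest', hpr⟩ := List.exists_cons_of_ne_nil (l := rs ++ [(md' + 1, nd)]) (by simp)
  rw [hpr, gammaBlocks_cons₂, ← hpr]
  rw [List.dropLast_concat, List.getLastD_concat]
  have hns : n0 :: (rs ++ [(md' + 1, nd)]).map Prod.snd
      = (n0 :: rs.map Prod.snd) ++ [nd] := by simp
  rw [hns]
  simp only [List.dropLast_concat, List.getLastD_concat]
  set F := rs.flatMap (fun q => 2 :: List.replicate (q.1 - 1) 1) with hF
  set T := (n0 :: rs.map Prod.snd).dropLast.flatMap
      (fun nj => List.replicate (nj - 1) 2 ++ [1])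
    ++ List.replicate ((n0 :: rs.map Prod.snd).getLastD 0 - 1 + nd) 2 with hT
  have hrw : List.replicate m0 1 ++ F ++ (2 :: List.replicate (md' + 1) 1) ++ T
      = (List.replicate m0 1 ++ F ++ (2 :: List.replicate md' 1)) ++ (1 :: T) := by
    rw [List.replicate_succ']
    simp
  rw [hrw]
  set A := List.replicate m0 1 ++ F ++ (2 :: List.replicate md' 1) with hA
  have hcF1 : F.count 1 = (rs.map (fun q => q.1 - 1)).sum := by
    rw [hF, List.count_flatMap]
    congr 1
    simp [Function.comp_def, List.count_replicate]
  have hcF2 : F.count 2 = rs.length := by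
    rw [hF, List.count_flatMap]
    simp [Function.comp_def, List.count_replicate]
  have hlF : F.length = (rs.map (fun q => q.1 - 1)).sum + rs.length := by
    rw [hF, List.length_flatMap]; exact sum_len_aux rs
  have hcT1 : T.count 1 = rs.length := by
    rw [hT]
    simp only [List.count_append, List.count_flatMap]
    rw [sum_len_aux2]
    simp [List.count_replicate]
  have hcount : (A ++ 1 :: T).count 1 = A.length := by
    rw [List.count_append, hA]
    simp only [List.count_append, List.count_cons, List.length_append,
      List.count_replicate, List.length_replicate, List.length_cons]
    simp [hcT1, hcF1, hlF]
    omega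
  unfold exc
  rw [hcount, List.take_left]
  rw [hA]
  simp [List.count_replicate, hcF2]

theorem stmt_10 (w : List ℕ) (hw : IsBinary w) :
    des w = exc (Gamma w) := by
  rcases eq_or_ne w [] with rfl | hne
  · rfl
  · have hdes := des_blocks_aux w.length w le_rfl hw hne
    obtain ⟨m0, n0, w2, hdec, hblocks, hlt, hbin2, hhead⟩ := blocks_cons w hw hne
    unfold Gamma
    rcases eq_or_ne w2 [] with rfl | hne2
    · rw [hblocks, blocks_nil] at hdes ⊢
      rw [exc_gamma_single]
      simpa using hdes
    · obtain ⟨hh2, hn0⟩ := hhead hne2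
      obtain ⟨a, b, c, _, hb2, _, _, _⟩ := blocks_cons w2 hbin2 hne2
      have hbne : blocks w2 ≠ [] := by rw [hb2]; simp
      rcases List.eq_nil_or_concat (blocks w2) with h | ⟨rs, ⟨md, nd⟩, hcat⟩
      · exact absurd h hbne
      · rw [List.concat_eq_append] at hcat
        have hmd : 0 < md := by
          have hmem : (md, nd) ∈ blocks w2 := by rw [hcat]; simp
          exact blocks_fst_pos w2.length w2 le_rfl hbin2 hh2 (md, nd) hmem
        rw [hblocks, hcat]
        rw [exc_gamma_cons m0 n0 md nd rs hmd]
        rw [hblocks, hcat] at hdes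
        simp only [List.length_cons, List.length_append, List.length_nil] at hdes
        omega
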